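/- The surrogate L_γ decomposes as a difference of convex functions: L_γ(r, b) = u(r, b) - v(r, b) where u(r, b) = -r·1{r < b1} + ((r - (1+γ)b1)/γ)·1{r ≥ b1} and v(r, b) = (-r + b2)·1{r < b2} + ((r - (1+γ)b1)/γ)·1{r > (1+γ)b1}, and both u(·, b) and v(·, b) are convex in r. -/

import Mathlib

/-- The surrogate loss `L_γ`. -/
noncomputable def Lgamma (γ r b1 b2 : ℝ) : ℝ :=
  if r ≤ b2 then -b2
  else if r ≤ b1 then -r
  else if r ≤ (1 + γ) * b1 then (r - (1 + γ) * b1) / γ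
  else 0

/-- `u(r, b) = -r·1{r < b1} + ((r - (1+γ)b1)/γ)·1{r ≥ b1}`. -/
noncomputable def uDC (γ r b1 b2 : ℝ) : ℝ :=
  if r < b1 then -r else (r - (1 + γ) * b1) / γ

/-- `v(r, b) = (-r + b2)·1{r < b2} + ((r - (1+γ)b1)/γ)·1{r > (1+γ)b1}`. -/
noncomputable def vDC (γ r b1 b2 : ℝ) : ℝ :=
  if r < b2 then -r + b2 else if (1 + γ) * b1 < r then (r - (1 + γ) * b1) / γ else 0

lemma affine_convex (a c : ℝ) : ConvexOn ℝ Set.univ (fun r : ℝ => a * r + c) := by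
  refine ⟨convex_univ, ?_⟩
  intro x _ y _ p q hp hq hpq
  have h : a * (p * x + q * y) + c = p * (a * x + c) + q * (a * y + c) := by
    have : p = 1 - q := by linarith
    subst this; ring
  simp only [smul_eq_mul]
  linarith [h]

theorem dc_decomposition (γ b1 b2 : ℝ) (hγ : 0 < γ) (h0 : 0 ≤ b2) (hle : b2 ≤ b1) :
    (∀ r : ℝ, Lgamma γ r b1 b2 = uDC γ r b1 b2 - vDC γ r b1 b2) ∧
    ConvexOn ℝ Set.univ (fun r => uDC γ r b1 b2) ∧
    ConvexOn ℝ Set.univ (fun r => vDC γ r b1 b2) := by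
  have hb1 : (0:ℝ) ≤ b1 := le_trans h0 hle
  have hb1' : b1 ≤ (1 + γ) * b1 := by nlinarith
  refine ⟨?_, ?_, ?_⟩
  · intro r
    unfold Lgamma uDC vDC
    split_ifs <;> (try push_neg at *) <;>
      first
        | linarith
        | (field_simp; nlinarith)
        | nlinarith
  · have heq : (fun r => uDC γ r b1 b2) =
        fun r : ℝ => max ((-1) * r + 0) ((1/γ) * r + (-(1 + γ) * b1 / γ)) := by
      funext r
      unfold uDC
      have e1 : (-1 : ℝ) * r + 0 = -r := by ring
      have e3 : (1/γ) * r + (-(1 + γ) * b1 / γ) = (r - (1 + γ) * b1) / γ := by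
        field_simp; ring
      rw [e1, e3]
      rcases lt_or_ge r b1 with h | h
      · rw [if_pos h, max_eq_left]
        rw [div_le_iff₀ hγ]; nlinarith
      · rw [if_neg (not_lt.2 h), max_eq_right]
        rw [le_div_iff₀ hγ]; nlinarith
    rw [heq]
    exact (affine_convex _ _).sup (affine_convex _ _)
  · have heq : (fun r => vDC γ r b1 b2) =
        fun r : ℝ => max ((-1) * r + b2)
          (max ((0:ℝ) * r + 0) ((1/γ) * r + (-(1 + γ) * b1 / γ))) := by
      funext r
      unfold vDC
      have e1 : (-1 : ℝ) * r + b2 = -r + b2 := by ring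
      have e2 : (0 : ℝ) * r + 0 = 0 := by ring
      have e3 : (1/γ) * r + (-(1 + γ) * b1 / γ) = (r - (1 + γ) * b1) / γ := by
        field_simp; ring
      rw [e1, e2, e3]
      rcases lt_or_ge r b2 with h | h
      · rw [if_pos h, max_eq_left]
        refine max_le (by linarith) ?_
        rw [div_le_iff₀ hγ]; nlinarith
      · rw [if_neg (not_lt.2 h)]
        rcases lt_or_ge ((1 + γ) * b1) r with h' | h'
        · rw [if_pos h',
            max_eq_right (le_of_lt (by rw [lt_div_iff₀ hγ]; nlinarith : (0:ℝ) < _)),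
            max_eq_right]
          rw [le_div_iff₀ hγ]; nlinarith
        · rw [if_neg (not_lt.2 h'),
            max_eq_left (by rw [div_le_iff₀ hγ]; nlinarith : _ ≤ (0:ℝ)),
            max_eq_right (by linarith : -r + b2 ≤ (0:ℝ))]
    rw [heq]
    exact (affine_convex _ _).sup ((affine_convex _ _).sup (affine_convex _ _))
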